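/- Let X be a real Hilbert space, let V ⊆ X be a finite-dimensional subspace with orthogonal projection P_V : X → X, and let F : X → X be continuously Fréchet differentiable and strongly monotone with constant α > 0. Then the map F_V := P_V ∘ F restricted to V, F_V : V → V, is strongly monotone with constant α, is a bijection of V onto V, and is a C¹-diffeomorphism of V (its inverse F_V⁻¹ : V → V is continuously differentiable). -/

import Mathlib

open Metric
open scoped RealInnerProductSpace


open Filter Set Topology

section Main


variable {E : Type*} [NormedAddCommGroup E] [InnerProductSpace ℝ E] [FiniteDimensional ℝ E]

omit [FiniteDimensional ℝ E] in
/-- derivative of a strongly monotone C¹ map is strongly positive -/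
lemma fderiv_strongly_monotone (f : E → E) (hf : ContDiff ℝ 1 f) (α : ℝ)
    (hmono : ∀ x y : E, α * ‖x - y‖ ^ 2 ≤ ⟪f x - f y, x - y⟫) (x h : E) :
    α * ‖h‖ ^ 2 ≤ ⟪fderiv ℝ f x h, h⟫ := by
  have hdiff := (hf.differentiable one_ne_zero)
  have hline : HasDerivAt (fun t : ℝ => x + t • h) h 0 := by
    simpa using (((hasDerivAt_id (0:ℝ)).smul_const h).const_add x)
  have hg : HasDerivAt (fun t : ℝ => f (x + t • h)) (fderiv ℝ f x h) 0 := by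
    have := (hdiff (x + (0:ℝ) • h)).hasFDerivAt.comp_hasDerivAt 0 hline
    simpa [Function.comp_def] using this
  set φ : ℝ → ℝ := fun t => ⟪f (x + t • h) - f x, h⟫ with hφdef
  have hφ : HasDerivAt φ ⟪fderiv ℝ f x h, h⟫ 0 := by
    have := HasDerivAt.inner ℝ (hg.sub_const (f x)) (hasDerivAt_const (0:ℝ) h)
    simpa [hφdef] using this
  have hslope : Tendsto (slope φ 0) (𝓝[>] 0) (𝓝 ⟪fderiv ℝ f x h, h⟫) :=
    (hasDerivAt_iff_tendsto_slope.mp hφ).mono_left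
      (nhdsWithin_mono _ (fun t ht => by simpa using ne_of_gt ht))
  refine ge_of_tendsto hslope ?_
  filter_upwards [self_mem_nhdsWithin] with t (ht : 0 < t)
  have hm := hmono (x + t • h) x
  rw [add_sub_cancel_left] at hm
  have h1 : ⟪f (x + t • h) - f x, t • h⟫ = t * φ t := by
    simp [hφdef, real_inner_smul_right]
  have h2 : ‖t • h‖ ^ 2 = t ^ 2 * ‖h‖ ^ 2 := by
    rw [norm_smul]; simp [mul_pow, abs_of_pos ht]
  rw [h1, h2] at hm
  have hφ0 : φ 0 = 0 := by simp [hφdef]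
  rw [slope_def_field, hφ0, sub_zero, sub_zero, le_div_iff₀ ht]
  nlinarith [hm]

lemma strongly_monotone_C1_diffeo (f : E → E) (hf : ContDiff ℝ 1 f) (α : ℝ) (hα : 0 < α)
    (hmono : ∀ x y : E, α * ‖x - y‖ ^ 2 ≤ ⟪f x - f y, x - y⟫) :
    Function.Bijective f ∧ ∃ G : E → E,
      Function.LeftInverse G f ∧ Function.RightInverse G f ∧ ContDiff ℝ 1 G := by
  have hcont : Continuous f := hf.continuous
  -- injectivity
  have hinj : Function.Injective f := by
    intro a b hab
    have := hmono a b
    rw [hab, sub_self, inner_zero_left] at this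
    have h5 : ‖a - b‖ ^ 2 = 0 := le_antisymm (by nlinarith) (sq_nonneg _)
    have h6 : ‖a - b‖ = 0 := by
      exact pow_eq_zero_iff (two_ne_zero) |>.1 h5
    rwa [norm_sub_eq_zero_iff] at h6
  -- antilipschitz
  have hexp : ∀ a b : E, α * ‖a - b‖ ≤ ‖f a - f b‖ := by
    intro a b
    rcases eq_or_ne a b with rfl | hne
    · simp
    · have h1 := hmono a b
      have h2 := real_inner_le_norm (f a - f b) (a - b)
      have h3 : 0 < ‖a - b‖ := by simpa [sub_eq_zero] using hne
      nlinarith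
  have hanti : AntilipschitzWith (⟨α⁻¹, by positivity⟩ : NNReal) f := by
    refine AntilipschitzWith.of_le_mul_dist fun a b => ?_
    have h1 := hexp a b
    rw [dist_eq_norm, dist_eq_norm]
    change ‖a - b‖ ≤ α⁻¹ * ‖f a - f b‖
    calc ‖a - b‖ = α⁻¹ * (α * ‖a - b‖) := by field_simp
    _ ≤ α⁻¹ * ‖f a - f b‖ := by
        exact mul_le_mul_of_nonneg_left h1 (le_of_lt (inv_pos.2 hα))
  -- invertible derivative
  have hderiv := fderiv_strongly_monotone f hf α hmono
  have hLinj : ∀ x : E, Function.Injective (fderiv ℝ f x) := by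
    intro x a b hab
    have h0 : fderiv ℝ f x (a - b) = 0 := by
      rw [map_sub, hab, sub_self]
    have := hderiv x (a - b)
    rw [h0, inner_zero_left] at this
    have h5 : ‖a - b‖ ^ 2 = 0 := le_antisymm (by nlinarith) (sq_nonneg _)
    have h6 : ‖a - b‖ = 0 := by
      exact pow_eq_zero_iff (two_ne_zero) |>.1 h5
    rwa [norm_sub_eq_zero_iff] at h6
  have hLbij : ∀ x : E, Function.Bijective (fderiv ℝ f x) := fun x =>
    ⟨hLinj x, (LinearMap.injective_iff_surjective (f := (fderiv ℝ f x).toLinearMap)).1 (hLinj x)⟩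
  let e : E → (E ≃L[ℝ] E) := fun x =>
    LinearEquiv.toContinuousLinearEquiv (LinearEquiv.ofBijective (fderiv ℝ f x).toLinearMap (hLbij x))
  have hecoe : ∀ x : E, (e x : E →L[ℝ] E) = fderiv ℝ f x := fun x => by
    ext v; rfl
  have hfd : ∀ x : E, HasFDerivAt f (e x : E →L[ℝ] E) x := fun x => by
    rw [hecoe x]; exact ((hf.differentiable one_ne_zero) x).hasFDerivAt
  have hstrict : ∀ x : E, HasStrictFDerivAt f (e x : E →L[ℝ] E) x := fun x =>
    hf.contDiffAt.hasStrictFDerivAt' (hfd x) one_ne_zero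
  -- open map
  have hopen : IsOpenMap f := isOpenMap_of_hasStrictFDerivAt_equiv hstrict
  -- proper, hence closed range
  haveI : ProperSpace E := FiniteDimensional.proper ℝ E
  have hproper : IsProperMap f := by
    rw [isProperMap_iff_tendsto_cocompact]
    refine ⟨hcont, ?_⟩
    rw [← cobounded_eq_cocompact]
    exact hanti.tendsto_cobounded
  have hclosed : IsClosed (Set.range f) := hproper.isClosedMap.isClosed_range
  -- surjectivity by connectedness
  haveI : PreconnectedSpace E := ⟨(convex_univ : Convex ℝ (univ : Set E)).isPreconnected⟩
  have hsurj : Function.Surjective f := by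
    rw [← Set.range_eq_univ]
    exact IsClopen.eq_univ ⟨hclosed, hopen.isOpen_range⟩ ⟨f 0, Set.mem_range_self 0⟩
  refine ⟨⟨hinj, hsurj⟩, Function.invFun f, Function.leftInverse_invFun hinj,
    Function.rightInverse_invFun hsurj, ?_⟩
  -- the inverse is C¹
  rw [contDiff_iff_contDiffAt]
  intro y
  obtain ⟨x, rfl⟩ := hsurj y
  set li := hf.contDiffAt.localInverse (hfd x) one_ne_zero with hli_def
  have hli : ContDiffAt ℝ 1 li (f x) := hf.contDiffAt.to_localInverse (hfd x) one_ne_zero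
  have hev : ∀ᶠ z in nhds (f x), f (li z) = z :=
    (hf.contDiffAt.hasStrictFDerivAt' (hfd x) one_ne_zero).eventually_right_inverse
  refine hli.congr_of_eventuallyEq ?_
  filter_upwards [hev] with z hz
  exact hinj (by rw [Function.invFun_eq (hsurj z), hz])

end Main




/-- **Strongly monotone `C¹`-diffeomorphisms discretize to strongly monotone
`C¹`-diffeomorphisms** (Lemma 3.8 of the paper).  If `F : X → X` is `C¹` and strongly monotone
with constant `α > 0` and `V ⊆ X` is a finite-dimensional subspace with orthogonal projection
`P_V`, then `F_V := P_V ∘ F|_V : V → V` is strongly monotone with constant `α`, bijective, `C¹`,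
and its inverse is `C¹`, i.e. `F_V` is a `C¹`-diffeomorphism of `V`. -/

theorem strongly_monotone_projected_restriction_is_C1_diffeo
    {X : Type*} [NormedAddCommGroup X] [InnerProductSpace ℝ X] [CompleteSpace X]
    (V : Submodule ℝ X) [FiniteDimensional ℝ V]
    (F : X → X) (hF : ContDiff ℝ 1 F)
    (α : ℝ) (hα : 0 < α)
    (hmono : ∀ x y : X, α * ‖x - y‖ ^ 2 ≤ ⟪F x - F y, x - y⟫) :
    -- `F_V = P_V ∘ F|_V` is strongly monotone with constant `α`
    (∀ x y : V, α * ‖x - y‖ ^ 2 ≤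
      ⟪Submodule.orthogonalProjection V (F x) -Submodule.orthogonalProjection V (F y), x - y⟫) ∧
    -- it is a bijection of `V` onto `V`
    Function.Bijective (fun v : V =>Submodule.orthogonalProjection V (F v)) ∧
    -- it is continuously differentiable
    ContDiff ℝ 1 (fun v : V =>Submodule.orthogonalProjection V (F v)) ∧
    -- and its inverse is continuously differentiable
    (∃ G : V → V,
      Function.LeftInverse G (fun v : V =>Submodule.orthogonalProjection V (F v)) ∧
      Function.RightInverse G (fun v : V =>Submodule.orthogonalProjection V (F v)) ∧
      ContDiff ℝ 1 G) := by
  set f : V → V := fun v =>Submodule.orthogonalProjection V (F v) with hfdef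
  have hfC1 : ContDiff ℝ 1 f :=
    (Submodule.orthogonalProjection V).contDiff.comp (hF.comp V.subtypeL.contDiff)
  have hmono' : ∀ x y : V, α * ‖x - y‖ ^ 2 ≤ ⟪f x - f y, x - y⟫ := by
    intro x y
    have hnorm : ‖x - y‖ = ‖(x : X) - (y : X)‖ := by
      norm_cast
    have hinner : ⟪f x - f y, x - y⟫ = ⟪F (x : X) - F (y : X), (x : X) - (y : X)⟫ := by
      rw [inner_sub_left, Submodule.inner_orthogonalProjection_eq_of_mem_right,
        Submodule.inner_orthogonalProjection_eq_of_mem_right, ← inner_sub_left,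
        AddSubgroupClass.coe_sub]
    rw [hinner, hnorm]
    exact hmono _ _
  obtain ⟨hbij, G, hGl, hGr, hGC1⟩ := strongly_monotone_C1_diffeo f hfC1 α hα hmono'
  exact ⟨hmono', hbij, hfC1, G, hGl, hGr, hGC1⟩
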